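/- Let F be a finite field and let C : F^n → F^m be a function computed by a circuit whose underlying directed acyclic graph G has n input vertices and m output vertices, where each internal/output gate computes an arbitrary function of its inputs. Suppose C satisfies dist(C(x), C(y)) ≥ m - dist(x,y) + 1 for all distinct x, y ∈ F^n. Then G is an (n, m)-superconcentrator: for every pair of equal-size subsets X of inputs and Y of outputs, there exist |X| vertex-disjoint paths from X to Y. -/

import Mathlib

namespace SCAux
open List

set_option linter.unusedSectionVars false

variable {V : Type*} [DecidableEq V]

/-- A walk (list of vertices chained by `R`) starting in `X` and ending in `Y`. -/
def IsWalk (R : V → V → Prop) (X Y : Finset V) (p : List V) : Prop :=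
  p.Chain' R ∧ (∃ a ∈ X, p.head? = some a) ∧ (∃ b ∈ Y, p.getLast? = some b)

/-- `S` separates `X` from `Y`: every walk from `X` to `Y` meets `S`. -/
def Sep (R : V → V → Prop) (X Y S : Finset V) : Prop :=
  ∀ p, IsWalk R X Y p → ∃ v ∈ S, v ∈ p

lemma IsWalk.mono {R R' : V → V → Prop} {X Y : Finset V} {p : List V}
    (h : IsWalk R X Y p) (hRR' : ∀ a b, R a b → R' a b) : IsWalk R' X Y p :=
  ⟨h.1.imp hRR', h.2.1, h.2.2⟩

lemma ne_nil_of_head? {p : List V} {a : V} (h : p.head? = some a) : p ≠ [] := by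
  intro hn; subst hn; simp at h

lemma ne_nil_of_getLast? {p : List V} {a : V} (h : p.getLast? = some a) : p ≠ [] := by
  intro hn; subst hn; simp at h

lemma mem_of_head? {p : List V} {a : V} (h : p.head? = some a) : a ∈ p := by
  cases p with
  | nil => simp at h
  | cons x xs => simp at h; simp [h]

lemma mem_of_getLast? {p : List V} {a : V} (h : p.getLast? = some a) : a ∈ p := by
  have := List.mem_getLast?_eq_getLast (l := p) h
  obtain ⟨hne, h'⟩ := this
  subst h'
  exact List.getLast_mem hne

lemma head?_of_prefix {l p : List V} (h : l <+: p) (hl : l ≠ []) : p.head? = l.head? := by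
  obtain ⟨t, rfl⟩ := h
  cases l with
  | nil => exact absurd rfl hl
  | cons x xs => simp

lemma getLast?_of_suffix {l p : List V} (h : l <:+ p) (hl : l ≠ []) : p.getLast? = l.getLast? := by
  obtain ⟨t, rfl⟩ := h
  rw [List.getLast?_append]
  have : l.getLast?.isSome := List.getLast?_isSome.2 hl
  cases hlg : l.getLast? with
  | none => rw [hlg] at this; simp at this
  | some b => simp

/-- cut a list at its first vertex belonging to `A`. -/
def cutAt (A : Finset V) : List V → List V
  | [] => []
  | x :: xs => if x ∈ A then [x] else x :: cutAt A xs

lemma cutAt_prefix (A : Finset V) (p : List V) : cutAt A p <+: p := by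
  induction p with
  | nil => simp [cutAt]
  | cons x xs ih =>
    by_cases hx : x ∈ A
    · simp [cutAt, hx]
    · simp only [cutAt, if_neg hx]
      obtain ⟨t, ht⟩ := ih
      exact ⟨t, by rw [List.cons_append, ht]⟩

lemma cutAt_spec {A : Finset V} {p : List V} (h : ∃ a ∈ p, a ∈ A) :
    ∃ r b, cutAt A p = r ++ [b] ∧ b ∈ A ∧ ∀ w ∈ r, w ∉ A := by
  induction p with
  | nil => simp at h
  | cons x xs ih =>
    by_cases hx : x ∈ A
    · exact ⟨[], x, by simp [cutAt, hx], hx, by simp⟩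
    · obtain ⟨a, ha, haA⟩ := h
      rcases List.mem_cons.1 ha with rfl | ha'
      · exact absurd haA hx
      · obtain ⟨r, b, h1, h2, h3⟩ := ih ⟨a, ha', haA⟩
        refine ⟨x :: r, b, ?_, h2, ?_⟩
        · simp [cutAt, if_neg hx, h1]
        · intro w hw
          rcases List.mem_cons.1 hw with rfl | hw'
          · exact hx
          · exact h3 w hw'

/-- cut a list at its last vertex belonging to `A`, keeping the tail. -/
def sufAt (A : Finset V) (p : List V) : List V := (cutAt A p.reverse).reverse

lemma sufAt_suffix (A : Finset V) (p : List V) : sufAt A p <:+ p := by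
  have h := cutAt_prefix A p.reverse
  apply List.reverse_prefix.mp
  simpa [sufAt] using h

lemma sufAt_spec {A : Finset V} {p : List V} (h : ∃ a ∈ p, a ∈ A) :
    ∃ b r, sufAt A p = b :: r ∧ b ∈ A ∧ ∀ w ∈ r, w ∉ A := by
  obtain ⟨a, ha, haA⟩ := h
  obtain ⟨r, b, h1, h2, h3⟩ := cutAt_spec (A := A) (p := p.reverse)
    ⟨a, List.mem_reverse.2 ha, haA⟩
  refine ⟨b, r.reverse, ?_, h2, ?_⟩
  · rw [sufAt, h1]; simp
  · intro w hw; exact h3 w (List.mem_reverse.1 hw)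

/-- gluing two walks sharing endpoint `c`. -/
lemma glue_spec {R : V → V → Prop} {p q : List V} {c : V}
    (hp : p.Chain' R) (hq : q.Chain' R)
    (hpl : p.getLast? = some c) (hqh : q.head? = some c) :
    (p ++ q.tail).Chain' R ∧ (p ++ q.tail).head? = p.head? ∧
      (p ++ q.tail).getLast? = q.getLast? ∧ ∀ w ∈ p ++ q.tail, w ∈ p ∨ w ∈ q := by
  obtain ⟨t, rfl⟩ : ∃ t, q = c :: t := by
    cases q with
    | nil => simp at hqh
    | cons x xs => simp at hqh; exact ⟨xs, by rw [hqh]⟩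
  simp only [List.Chain', List.isChain_cons] at hq
  refine ⟨?_, ?_, ?_, ?_⟩
  · simp only [List.Chain', List.isChain_append]
    refine ⟨hp, hq.2, ?_⟩
    intro x hx y hy
    rw [hpl] at hx; simp at hx; subst hx
    exact hq.1 y hy
  · rw [List.head?_append]
    have : p.head?.isSome := by
      have := ne_nil_of_getLast? hpl
      cases p <;> simp_all
    cases hph : p.head? with
    | none => rw [hph] at this; simp at this
    | some a => simp
  · show (p ++ t).getLast? = (c :: t).getLast?
    rw [List.getLast?_append, show (c :: t) = [c] ++ t from rfl, List.getLast?_append, hpl]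
    simp
  · intro w hw
    rcases List.mem_append.1 hw with h | h
    · exact Or.inl h
    · exact Or.inr (List.mem_cons_of_mem _ h)

/-- removing one edge from a chain relation. -/
lemma chain'_cases {R R' : V → V → Prop} {u v : V}
    (h : ∀ a b, R a b → R' a b ∨ (a = u ∧ b = v)) :
    ∀ p : List V, p.Chain' R → p.Chain' R' ∨ (u ∈ p.dropLast ∧ v ∈ p.tail) := by
  intro p
  induction p with
  | nil => intro _; left; exact List.isChain_nil
  | cons x xs ih =>
    cases xs with
    | nil => intro _; left; exact List.isChain_singleton _
    | cons y ys =>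
      intro hc
      simp only [List.Chain', List.isChain_cons_cons] at hc
      rcases h x y hc.1 with hR' | ⟨rfl, rfl⟩
      · rcases ih hc.2 with hch | ⟨hu, hv⟩
        · exact Or.inl (List.isChain_cons_cons.2 ⟨hR', hch⟩)
        · right
          constructor
          · show u ∈ (x :: y :: ys).dropLast
            rw [List.dropLast_cons₂]
            exact List.mem_cons_of_mem _ hu
          · exact List.mem_cons_of_mem _ hv
      · right
        constructor
        · show x ∈ (x :: y :: ys).dropLast
          rw [List.dropLast_cons₂]
          exact List.mem_cons_self
        · exact List.mem_cons_self

lemma prefix_concat_concat {r₁ r₂ : List V} {c d : V}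
    (h : r₁ ++ [c] <+: r₂ ++ [d]) : (∀ w ∈ r₁, w ∈ r₂) ∧ (c = d ∨ c ∈ r₂) := by
  by_cases hlen : r₁.length + 1 ≤ r₂.length
  · have h2 : r₁ ++ [c] <+: r₂ := by
      rw [List.prefix_iff_eq_take] at h
      rw [List.take_append_of_le_length (by simpa using hlen)] at h
      rw [h]
      exact List.take_prefix _ _
    have hsub := h2.subset
    exact ⟨fun w hw => hsub (by simp [hw]), Or.inr (hsub (by simp))⟩
  · have hle := h.length_le
    simp only [List.length_append, List.length_singleton] at hle
    have : (r₁ ++ [c]).length = (r₂ ++ [d]).length := by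
      simp only [List.length_append, List.length_singleton]; omega
    have heq := h.eq_of_length this
    obtain ⟨h1, h2⟩ := List.append_inj' heq (by simp)
    subst h1
    simp at h2
    exact ⟨fun w hw => hw, Or.inl h2⟩

lemma suffix_cons_cons {r₁ r₂ : List V} {c d : V}
    (h : c :: r₁ <:+ d :: r₂) : (∀ w ∈ r₁, w ∈ r₂) ∧ (c = d ∨ c ∈ r₂) := by
  have h' : r₁.reverse ++ [c] <+: r₂.reverse ++ [d] := by
    rw [← List.reverse_cons, ← List.reverse_cons]
    exact List.reverse_prefix.2 h
  obtain ⟨h1, h2⟩ := prefix_concat_concat h'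
  refine ⟨fun w hw => List.mem_reverse.1 (h1 w (List.mem_reverse.2 hw)), ?_⟩
  rcases h2 with h2 | h2
  · exact Or.inl h2
  · exact Or.inr (List.mem_reverse.1 h2)

lemma getLast?_cons_ne {l : List V} (a : V) (h : l ≠ []) :
    (a :: l).getLast? = l.getLast? := by
  rw [show a :: l = [a] ++ l from rfl, List.getLast?_append]
  obtain ⟨z, hz⟩ := Option.isSome_iff_exists.1 (List.getLast?_isSome.2 h)
  rw [hz]
  rfl

lemma menger_empty (X Y : Finset V) (k : ℕ)
    (hsep : ∀ S : Finset V, Sep (fun a b => (a, b) ∈ (∅ : Finset (V × V))) X Y S → k ≤ S.card) :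
    ∃ f : Fin k → List V, (∀ i, IsWalk (fun a b => (a, b) ∈ (∅ : Finset (V × V))) X Y (f i)) ∧
      ∀ i j : Fin k, i ≠ j → ∀ w, w ∈ f i → w ∉ f j := by
  have hXY : Sep (fun a b => (a, b) ∈ (∅ : Finset (V × V))) X Y (X ∩ Y) := by
    intro p hp
    obtain ⟨hch, ⟨a, haX, hha⟩, ⟨b, hbY, hhb⟩⟩ := hp
    cases p with
    | nil => simp at hha
    | cons x xs =>
      cases xs with
      | nil =>
        simp at hha hhb
        refine ⟨x, Finset.mem_inter.2 ⟨hha ▸ haX, hhb ▸ hbY⟩, List.mem_singleton_self x⟩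
      | cons y ys =>
        simp only [List.Chain', List.isChain_cons_cons] at hch
        exact absurd hch.1 (by simp)
  have hk := hsep _ hXY
  obtain ⟨T, hTsub, hTcard⟩ := Finset.exists_subset_card_eq hk
  let e := Finset.equivFinOfCardEq hTcard
  refine ⟨fun i => [((e.symm i : V))], ?_, ?_⟩
  · intro i
    have hmem := (e.symm i).2
    have hmem' := hTsub hmem
    rw [Finset.mem_inter] at hmem'
    exact ⟨List.isChain_singleton _, ⟨_, hmem'.1, rfl⟩, ⟨_, hmem'.2, rfl⟩⟩
  · intro i j hij w hwi hwj
    simp only [List.mem_singleton] at hwi hwj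
    apply hij
    have : e.symm i = e.symm j := Subtype.ext (by rw [← hwi, ← hwj])
    simpa using congrArg e this

theorem menger : ∀ (N : ℕ) (G : Finset (V × V)), G.card ≤ N → ∀ (X Y : Finset V) (k : ℕ),
    (∀ S : Finset V, Sep (fun a b => (a, b) ∈ G) X Y S → k ≤ S.card) →
    ∃ f : Fin k → List V, (∀ i, IsWalk (fun a b => (a, b) ∈ G) X Y (f i)) ∧
      ∀ i j : Fin k, i ≠ j → ∀ w, w ∈ f i → w ∉ f j := by
  intro N
  induction N with
  | zero =>
    intro G hG X Y k hsep
    have : G = ∅ := Finset.card_eq_zero.1 (Nat.le_zero.1 hG)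
    subst this
    exact menger_empty X Y k hsep
  | succ N IH =>
    intro G hG X Y k hsep
    by_cases hGe : G = ∅
    · subst hGe; exact menger_empty X Y k hsep
    obtain ⟨⟨u, v⟩, huv⟩ := Finset.nonempty_iff_ne_empty.2 hGe
    set G' := G.erase (u, v) with hG'def
    have hG'card : G'.card ≤ N := by
      have h1 := Finset.card_erase_of_mem huv
      rw [← hG'def] at h1
      have hpos : 0 < G.card := Finset.card_pos.2 ⟨_, huv⟩
      omega
    have hsub : ∀ a b : V, (a, b) ∈ G' → (a, b) ∈ G := fun a b h => Finset.mem_of_mem_erase h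
    have hcases : ∀ a b : V, (a, b) ∈ G → ((a, b) ∈ G' ∨ (a = u ∧ b = v)) := by
      intro a b h
      by_cases hab : (a, b) = (u, v)
      · right; simpa [Prod.ext_iff] using hab
      · left; exact Finset.mem_erase.2 ⟨hab, h⟩
    by_cases hbig : ∀ S : Finset V, Sep (fun a b => (a, b) ∈ G') X Y S → k ≤ S.card
    · obtain ⟨f, hf, hdisj⟩ := IH G' hG'card X Y k hbig
      exact ⟨f, fun i => (hf i).mono hsub, hdisj⟩
    push_neg at hbig
    obtain ⟨S, hS, hSk⟩ := hbig
    have hSepA : Sep (fun a b => (a, b) ∈ G) X Y (insert u S) := by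
      intro p hp
      rcases chain'_cases hcases p hp.1 with hch | ⟨hu, _⟩
      · obtain ⟨s, hs, hsp⟩ := hS p ⟨hch, hp.2.1, hp.2.2⟩
        exact ⟨s, Finset.mem_insert_of_mem hs, hsp⟩
      · exact ⟨u, Finset.mem_insert_self _ _, List.dropLast_subset _ hu⟩
    have hSepB : Sep (fun a b => (a, b) ∈ G) X Y (insert v S) := by
      intro p hp
      rcases chain'_cases hcases p hp.1 with hch | ⟨_, hv⟩
      · obtain ⟨s, hs, hsp⟩ := hS p ⟨hch, hp.2.1, hp.2.2⟩
        exact ⟨s, Finset.mem_insert_of_mem hs, hsp⟩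
      · exact ⟨v, Finset.mem_insert_self _ _, List.mem_of_mem_tail hv⟩
    have huS : u ∉ S := by
      intro h
      have := hsep _ hSepA
      rw [Finset.insert_eq_self.2 h] at this
      omega
    have hvS : v ∉ S := by
      intro h
      have := hsep _ hSepB
      rw [Finset.insert_eq_self.2 h] at this
      omega
    have hAcard : (insert u S).card = k := by
      have h1 := hsep _ hSepA
      have h2 := Finset.card_insert_of_notMem huS
      omega
    have hBcard : (insert v S).card = k := by
      have h1 := hsep _ hSepB
      have h2 := Finset.card_insert_of_notMem hvS
      omega
    set A := insert u S with hAdef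
    set B := insert v S with hBdef
    have hSA : S ⊆ A := Finset.subset_insert _ _
    have hSB : S ⊆ B := Finset.subset_insert _ _
    have huA : u ∈ A := Finset.mem_insert_self _ _
    have hvB : v ∈ B := Finset.mem_insert_self _ _
    -- every X–A separator in G' is large
    have hsepP : ∀ T : Finset V, Sep (fun a b => (a, b) ∈ G') X A T → k ≤ T.card := by
      intro T hT
      apply hsep
      intro p hp
      obtain ⟨a0, ha0, ha0p⟩ := hSepA p hp
      obtain ⟨r, b, hrb, hbA, hrA⟩ := cutAt_spec (A := A) (p := p) ⟨a0, ha0p, ha0⟩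
      have hpre := cutAt_prefix A p
      have hch : (cutAt A p).Chain' (fun a b => (a, b) ∈ G) := hp.1.prefix hpre
      have hch' : (cutAt A p).Chain' (fun a b => (a, b) ∈ G') := by
        rcases chain'_cases hcases _ hch with h | ⟨hu', _⟩
        · exact h
        · rw [hrb, List.dropLast_concat] at hu'
          exact absurd huA (hrA u hu')
      have hne : cutAt A p ≠ [] := by rw [hrb]; simp
      have hwalk : IsWalk (fun a b => (a, b) ∈ G') X A (cutAt A p) := by
        refine ⟨hch', ?_, ⟨b, hbA, by rw [hrb]; exact List.getLast?_concat⟩⟩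
        obtain ⟨a, haX, hha⟩ := hp.2.1
        exact ⟨a, haX, by rw [← head?_of_prefix hpre hne]; exact hha⟩
      obtain ⟨s, hsT, hsp⟩ := hT _ hwalk
      exact ⟨s, hsT, hpre.subset hsp⟩
    -- every B–Y separator in G' is large
    have hsepQ : ∀ T : Finset V, Sep (fun a b => (a, b) ∈ G') B Y T → k ≤ T.card := by
      intro T hT
      apply hsep
      intro p hp
      obtain ⟨b0, hb0, hb0p⟩ := hSepB p hp
      obtain ⟨c, r, hcr, hcB, hrB⟩ := sufAt_spec (A := B) (p := p) ⟨b0, hb0p, hb0⟩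
      have hsuf := sufAt_suffix B p
      have hch : (sufAt B p).Chain' (fun a b => (a, b) ∈ G) := hp.1.suffix hsuf
      have hch' : (sufAt B p).Chain' (fun a b => (a, b) ∈ G') := by
        rcases chain'_cases hcases _ hch with h | ⟨_, hv'⟩
        · exact h
        · rw [hcr, List.tail_cons] at hv'
          exact absurd hvB (hrB v hv')
      have hne : sufAt B p ≠ [] := by rw [hcr]; simp
      have hwalk : IsWalk (fun a b => (a, b) ∈ G') B Y (sufAt B p) := by
        refine ⟨hch', ⟨c, hcB, by rw [hcr]; rfl⟩, ?_⟩
        obtain ⟨b, hbY, hlb⟩ := hp.2.2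
        exact ⟨b, hbY, by rw [← getLast?_of_suffix hsuf hne]; exact hlb⟩
      obtain ⟨s, hsT, hsp⟩ := hT _ hwalk
      exact ⟨s, hsT, hsuf.subset hsp⟩
    obtain ⟨f, hfwalk, hfdisj⟩ := IH G' hG'card X A k hsepP
    obtain ⟨g, hgwalk, hgdisj⟩ := IH G' hG'card B Y k hsepQ
    -- truncate
    set f' : Fin k → List V := fun i => cutAt A (f i) with hf'def
    set g' : Fin k → List V := fun i => sufAt B (g i) with hg'def
    have hfspec : ∀ i, ∃ r e, f' i = r ++ [e] ∧ e ∈ A ∧ ∀ w ∈ r, w ∉ A := by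
      intro i
      obtain ⟨b, hbA, hlb⟩ := (hfwalk i).2.2
      exact cutAt_spec ⟨b, mem_of_getLast? hlb, hbA⟩
    choose rf ef hf1 hf2 hf3 using hfspec
    have hgspec : ∀ i, ∃ c r, g' i = c :: r ∧ c ∈ B ∧ ∀ w ∈ r, w ∉ B := by
      intro i
      obtain ⟨a, haB, hha⟩ := (hgwalk i).2.1
      exact sufAt_spec ⟨a, mem_of_head? hha, haB⟩
    choose bg rg hg1 hg2 hg3 using hgspec
    have hf'pre : ∀ i, f' i <+: f i := fun i => cutAt_prefix A (f i)
    have hg'suf : ∀ i, g' i <:+ g i := fun i => sufAt_suffix B (g i)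
    have hf'ne : ∀ i, f' i ≠ [] := fun i => by rw [hf1 i]; simp
    have hg'ne : ∀ i, g' i ≠ [] := fun i => by rw [hg1 i]; simp
    have hf'last : ∀ i, (f' i).getLast? = some (ef i) := fun i => by
      rw [hf1 i]; exact List.getLast?_concat
    have hg'head : ∀ i, (g' i).head? = some (bg i) := fun i => by rw [hg1 i]; rfl
    have hefmemf' : ∀ i, ef i ∈ f' i := fun i => by rw [hf1 i]; simp
    have hbgmemg' : ∀ i, bg i ∈ g' i := fun i => by rw [hg1 i]; simp
    have hefmem : ∀ i, ef i ∈ f i := fun i => (hf'pre i).subset (hefmemf' i)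
    have hbgmem : ∀ i, bg i ∈ g i := fun i => (hg'suf i).subset (hbgmemg' i)
    have hefinj : Function.Injective ef := by
      intro i j hij
      by_contra hne
      exact hfdisj i j hne (ef i) (hefmem i) (by rw [hij]; exact hefmem j)
    have hbginj : Function.Injective bg := by
      intro i j hij
      by_contra hne
      exact hgdisj i j hne (bg i) (hbgmem i) (by rw [hij]; exact hbgmem j)
    have hbgsurj : ∀ a ∈ B, ∃ i, bg i = a := by
      intro a ha
      have himg : Finset.image bg Finset.univ = B := by
        apply Finset.eq_of_subset_of_card_le
        · intro x hx
          simp only [Finset.mem_image] at hx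
          obtain ⟨i, _, rfl⟩ := hx
          exact hg2 i
        · rw [Finset.card_image_of_injective _ hbginj, Finset.card_univ, Fintype.card_fin, hBcard]
      rw [← himg] at ha
      simpa using Finset.mem_image.1 ha
    -- the matching between endpoint sets
    have htB : ∀ i, (if ef i = u then v else ef i) ∈ B := by
      intro i
      by_cases h : ef i = u
      · simpa [h] using hvB
      · have h2 := hf2 i
        rw [hAdef, Finset.mem_insert] at h2
        rcases h2 with h' | h'
        · exact absurd h' h
        · simp only [if_neg h]
          exact hSB h'
    have hjj : ∀ i, ∃ j, bg j = (if ef i = u then v else ef i) := fun i => hbgsurj _ (htB i)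
    choose jj hjj' using hjj
    have htinj : ∀ i i', (if ef i = u then v else ef i) = (if ef i' = u then v else ef i') → i = i' := by
      intro i i' h
      apply hefinj
      by_cases h1 : ef i = u <;> by_cases h2 : ef i' = u
      · rw [h1, h2]
      · exfalso
        rw [if_pos h1, if_neg h2] at h
        have h3 := hf2 i'
        rw [hAdef, Finset.mem_insert] at h3
        rcases h3 with h' | h'
        · exact h2 h'
        · rw [← h] at h'; exact hvS h'
      · exfalso
        rw [if_neg h1, if_pos h2] at h
        have h3 := hf2 i
        rw [hAdef, Finset.mem_insert] at h3
        rcases h3 with h' | h'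
        · exact h1 h'
        · rw [h] at h'; exact hvS h'
      · rwa [if_neg h1, if_neg h2] at h
    have hjjinj : ∀ i i', i ≠ i' → jj i ≠ jj i' := by
      intro i i' hne heq
      exact hne (htinj i i' (by rw [← hjj' i, ← hjj' i', heq]))
    -- the gluing piece
    have hstep : ∀ i, ∃ qi : List V, qi.Chain' (fun a b => (a, b) ∈ G) ∧
        qi.head? = some (ef i) ∧ qi.getLast? = (g (jj i)).getLast? ∧
        ∀ w ∈ qi, w ∈ g' (jj i) ∨ w ∈ f' i := by
      intro i
      have hg'chainG : (g' (jj i)).Chain' (fun a b => (a, b) ∈ G) :=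
        ((hgwalk (jj i)).1.suffix (hg'suf _)).imp hsub
      have hlastg : (g' (jj i)).getLast? = (g (jj i)).getLast? :=
        (getLast?_of_suffix (hg'suf _) (hg'ne _)).symm
      by_cases h : ef i = u
      · refine ⟨u :: g' (jj i), ?_, by simp [h], ?_, ?_⟩
        · simp only [List.Chain', List.isChain_cons]
          refine ⟨?_, hg'chainG⟩
          intro y hy
          rw [hg'head (jj i), hjj' i, if_pos h] at hy
          simp only [Option.mem_def, Option.some.injEq] at hy
          rw [← hy]
          exact huv
        · rw [getLast?_cons_ne u (hg'ne (jj i))]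
          exact hlastg
        · intro w hw
          rcases List.mem_cons.1 hw with rfl | hw'
          · exact Or.inr (h ▸ hefmemf' i)
          · exact Or.inl hw'
      · refine ⟨g' (jj i), hg'chainG, ?_, hlastg, fun w hw => Or.inl hw⟩
        rw [hg'head (jj i), hjj' i, if_neg h]
    choose q hq1 hq2 hq3 hq4 using hstep
    have hf'chainG : ∀ i, (f' i).Chain' (fun a b => (a, b) ∈ G) :=
      fun i => ((hfwalk i).1.prefix (hf'pre i)).imp hsub
    have hglue := fun i => glue_spec (hf'chainG i) (hq1 i) (hf'last i) (hq2 i)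
    -- the cross lemma
    have hcross : ∀ i i' w, w ∈ f' i → w ∈ g' i' → w = ef i ∧ w = bg i' ∧ w ∈ S := by
      intro i i' w hwf hwg
      obtain ⟨r₁, c₁, h11, h12, h13⟩ :=
        cutAt_spec (A := ({w} : Finset V)) (p := f' i) ⟨w, hwf, Finset.mem_singleton_self w⟩
      rw [Finset.mem_singleton] at h12
      rw [h12] at h11
      obtain ⟨c₂, r₂, h21, h22, h23⟩ :=
        sufAt_spec (A := ({w} : Finset V)) (p := g' i') ⟨w, hwg, Finset.mem_singleton_self w⟩
      rw [Finset.mem_singleton] at h22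
      rw [h22] at h21
      have hpre1 : cutAt ({w} : Finset V) (f' i) <+: f' i := cutAt_prefix _ _
      have hsuf2 : sufAt ({w} : Finset V) (g' i') <:+ g' i' := sufAt_suffix _ _
      have hch1 : (cutAt ({w} : Finset V) (f' i)).Chain' (fun a b => (a, b) ∈ G') :=
        ((hfwalk i).1.prefix (hf'pre i)).prefix hpre1
      have hch2 : (sufAt ({w} : Finset V) (g' i')).Chain' (fun a b => (a, b) ∈ G') :=
        ((hgwalk i').1.suffix (hg'suf i')).suffix hsuf2
      have hl1 : (cutAt ({w} : Finset V) (f' i)).getLast? = some w := by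
        rw [h11]; exact List.getLast?_concat
      have hh2 : (sufAt ({w} : Finset V) (g' i')).head? = some w := by rw [h21]; rfl
      obtain ⟨hc, hh, hl, hm⟩ := glue_spec hch1 hch2 hl1 hh2
      have hne1 : cutAt ({w} : Finset V) (f' i) ≠ [] := by rw [h11]; simp
      have hne2 : sufAt ({w} : Finset V) (g' i') ≠ [] := by rw [h21]; simp
      have hwalk : IsWalk (fun a b => (a, b) ∈ G') X Y
          (cutAt ({w} : Finset V) (f' i) ++ (sufAt ({w} : Finset V) (g' i')).tail) := by
        refine ⟨hc, ?_, ?_⟩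
        · obtain ⟨a, haX, hha⟩ := (hfwalk i).2.1
          refine ⟨a, haX, ?_⟩
          rw [hh, ← head?_of_prefix hpre1 hne1, ← head?_of_prefix (hf'pre i) (hf'ne i)]
          exact hha
        · obtain ⟨b, hbY, hlb⟩ := (hgwalk i').2.2
          refine ⟨b, hbY, ?_⟩
          rw [hl, ← getLast?_of_suffix hsuf2 hne2, ← getLast?_of_suffix (hg'suf i') (hg'ne i')]
          exact hlb
      obtain ⟨s, hsS, hsp⟩ := hS _ hwalk
      have hsw : s = w := by
        rcases hm s hsp with h | h
        · rw [h11] at h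
          rcases List.mem_append.1 h with h' | h'
          · exfalso
            have hpp : r₁ ++ [w] <+: rf i ++ [ef i] := by rw [← h11, ← hf1 i]; exact hpre1
            exact hf3 i s ((prefix_concat_concat hpp).1 s h') (hSA hsS)
          · simpa using h'
        · rw [h21] at h
          rcases List.mem_cons.1 h with h' | h'
          · exact h'
          · exfalso
            have hss : w :: r₂ <:+ bg i' :: rg i' := by rw [← h21, ← hg1 i']; exact hsuf2
            exact hg3 i' s ((suffix_cons_cons hss).1 s h') (hSB hsS)
      subst hsw
      refine ⟨?_, ?_, hsS⟩
      · have hx : s ∈ rf i ++ [ef i] := by rw [← hf1 i]; exact hwf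
        rcases List.mem_append.1 hx with h' | h'
        · exact absurd (hSA hsS) (hf3 i s h')
        · simpa using h'
      · have hx : s ∈ bg i' :: rg i' := by rw [← hg1 i']; exact hwg
        rcases List.mem_cons.1 hx with h' | h'
        · exact h'
        · exact absurd (hSB hsS) (hg3 i' s h')
    -- assemble the final family
    refine ⟨fun i => f' i ++ (q i).tail, ?_, ?_⟩
    · intro i
      obtain ⟨hc, hh, hl, hm⟩ := hglue i
      refine ⟨hc, ?_, ?_⟩
      · obtain ⟨a, haX, hha⟩ := (hfwalk i).2.1
        refine ⟨a, haX, ?_⟩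
        rw [hh, ← head?_of_prefix (hf'pre i) (hf'ne i)]
        exact hha
      · obtain ⟨b, hbY, hlb⟩ := (hgwalk (jj i)).2.2
        refine ⟨b, hbY, ?_⟩
        rw [hl, hq3 i]
        exact hlb
    · intro i i' hne w hwi hwi'
      have m1 : w ∈ f' i ∨ w ∈ g' (jj i) := by
        rcases (hglue i).2.2.2 w hwi with h | h
        · exact Or.inl h
        · rcases hq4 i w h with h' | h'
          · exact Or.inr h'
          · exact Or.inl h'
      have m2 : w ∈ f' i' ∨ w ∈ g' (jj i') := by
        rcases (hglue i').2.2.2 w hwi' with h | h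
        · exact Or.inl h
        · rcases hq4 i' w h with h' | h'
          · exact Or.inr h'
          · exact Or.inl h'
      rcases m1 with m1 | m1 <;> rcases m2 with m2 | m2
      · exact hfdisj i i' hne w ((hf'pre i).subset m1) ((hf'pre i').subset m2)
      · obtain ⟨he, hb, hwS⟩ := hcross i (jj i') w m1 m2
        rw [hjj' i'] at hb
        by_cases hcase : ef i' = u
        · rw [if_pos hcase] at hb
          exact hvS (hb ▸ hwS)
        · rw [if_neg hcase] at hb
          exact hne (hefinj (by rw [← he, ← hb]))
      · obtain ⟨he, hb, hwS⟩ := hcross i' (jj i) w m2 m1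
        rw [hjj' i] at hb
        by_cases hcase : ef i = u
        · rw [if_pos hcase] at hb
          exact hvS (hb ▸ hwS)
        · rw [if_neg hcase] at hb
          exact hne (hefinj (by rw [← he, ← hb]))
      · exact hgdisj (jj i) (jj i') (hjjinj i i' hne) w ((hg'suf _).subset m1) ((hg'suf _).subset m2)

end SCAux


/-- `p` is a (nonempty) directed path from `a` to `b` in the digraph with edge relation `E`. -/
def IsPathFromTo {V : Type*} (E : V → V → Prop) (p : List V) (a b : V) : Prop :=
  p.Chain' E ∧ p.head? = some a ∧ p.getLast? = some b

/-- There is a family of pairwise vertex-disjoint directed paths, one starting at each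
vertex of `S`, each ending at a vertex of `T`.  (Disjointness forces the endpoints to be
`|S|` distinct vertices of `T`.) -/
def HasDisjointPathFamily {V : Type*} (E : V → V → Prop) (S T : Finset V) : Prop :=
  ∃ P : V → List V,
    (∀ s ∈ S, ∃ t ∈ T, IsPathFromTo E (P s) s t) ∧
    (∀ s ∈ S, ∀ s' ∈ S, s ≠ s' → ∀ v, v ∈ P s → v ∉ P s')

/-- Any circuit over a finite field, with arbitrary gates, whose underlying DAG has `n`
inputs and `m` outputs and which encodes a code with
`dist(C x, C y) ≥ m - dist(x,y) + 1`, must (as a graph) be an `(n,m)`-superconcentrator. -/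
theorem stmt_12 {F V : Type*} [Field F] [Fintype F] [DecidableEq F] [Fintype V]
    {n m : ℕ} (E : V → V → Prop) (hacyclic : WellFounded E)
    (inp : Fin n ↪ V) (out : Fin m ↪ V)
    (val : (Fin n → F) → V → F)
    (hval_inp : ∀ (x : Fin n → F) (i : Fin n), val x (inp i) = x i)
    (hval_gate : ∀ v : V, (∀ i : Fin n, inp i ≠ v) → ∀ x y : Fin n → F,
      (∀ u : V, E u v → val x u = val y u) → val x v = val y v)
    (C : (Fin n → F) → Fin m → F)
    (hC : ∀ (x : Fin n → F) (j : Fin m), C x j = val x (out j))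
    (hdist : ∀ x y : Fin n → F, x ≠ y →
      (m : ℤ) - hammingDist x y + 1 ≤ hammingDist (C x) (C y)) :
    ∀ (X : Finset (Fin n)) (Y : Finset (Fin m)), X.card = Y.card →
      HasDisjointPathFamily E (X.map inp) (Y.map out) := by
  classical
  intro X Y hXY
  set k := X.card with hk
  set G : Finset (V × V) := Finset.univ.filter (fun p => E p.1 p.2) with hGdef
  have hGiff : ∀ a b : V, ((a, b) ∈ G) ↔ E a b := by
    intro a b; simp [hGdef]
  by_cases hbig : ∀ S : Finset V,
      SCAux.Sep (fun a b => (a, b) ∈ G) (X.map inp) (Y.map out) S → k ≤ S.card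
  · obtain ⟨f, hfwalk, hfdisj⟩ := SCAux.menger G.card G le_rfl (X.map inp) (Y.map out) k hbig
    have hfE : ∀ i, SCAux.IsWalk E (X.map inp) (Y.map out) (f i) :=
      fun i => (hfwalk i).mono (fun a b h => (hGiff a b).1 h)
    have hhead : ∀ i, ∃ a, (f i).head? = some a ∧ a ∈ X.map inp := by
      intro i
      obtain ⟨a, ha, h⟩ := (hfE i).2.1
      exact ⟨a, h, ha⟩
    choose hd hhd1 hhd2 using hhead
    have hdinj : Function.Injective hd := by
      intro i j hij
      by_contra hne
      exact hfdisj i j hne (hd i) (SCAux.mem_of_head? (hhd1 i))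
        (by rw [hij]; exact SCAux.mem_of_head? (hhd1 j))
    have hdsurj : ∀ s ∈ X.map inp, ∃ i, hd i = s := by
      intro s hs
      have himg : Finset.image hd Finset.univ = X.map inp := by
        apply Finset.eq_of_subset_of_card_le
        · intro x hx
          simp only [Finset.mem_image] at hx
          obtain ⟨i, _, rfl⟩ := hx
          exact hhd2 i
        · rw [Finset.card_image_of_injective _ hdinj, Finset.card_univ, Fintype.card_fin,
            Finset.card_map, hk]
      rw [← himg] at hs
      simpa using Finset.mem_image.1 hs
    refine ⟨fun s => if h : ∃ i, hd i = s then f h.choose else [], ?_, ?_⟩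
    · intro s hs
      obtain ⟨i, hi⟩ := hdsurj s hs
      have hex : ∃ i, hd i = s := ⟨i, hi⟩
      obtain ⟨b, hbY, hlb⟩ := (hfE hex.choose).2.2
      refine ⟨b, hbY, ?_⟩
      show IsPathFromTo E (if h : ∃ i, hd i = s then f h.choose else []) s b
      rw [dif_pos hex]
      exact ⟨(hfE hex.choose).1, by rw [hhd1 hex.choose, hex.choose_spec], hlb⟩
    · intro s hs s' hs' hss' w hw hw'
      obtain ⟨i, hi⟩ := hdsurj s hs
      obtain ⟨i', hi'⟩ := hdsurj s' hs'
      have hex : ∃ j, hd j = s := ⟨i, hi⟩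
      have hex' : ∃ j, hd j = s' := ⟨i', hi'⟩
      have hw2 : w ∈ f hex.choose := by
        have : w ∈ (if h : ∃ i, hd i = s then f h.choose else []) := hw
        rwa [dif_pos hex] at this
      have hw2' : w ∈ f hex'.choose := by
        have : w ∈ (if h : ∃ i, hd i = s' then f h.choose else []) := hw'
        rwa [dif_pos hex'] at this
      have hne : hex.choose ≠ hex'.choose := by
        intro h
        apply hss'
        rw [← hex.choose_spec, ← hex'.choose_spec, h]
      exact hfdisj _ _ hne w hw2 hw2'
  · exfalso
    push_neg at hbig
    obtain ⟨S, hS, hSk⟩ := hbig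
    have hF2 : 1 < Fintype.card F := Fintype.one_lt_card
    have hcard : Fintype.card (↥S → F) < Fintype.card (↥X → F) := by
      rw [Fintype.card_fun, Fintype.card_fun, Fintype.card_coe, Fintype.card_coe]
      exact Nat.pow_lt_pow_right hF2 hSk
    obtain ⟨z₁, z₂, hz, hvaleq⟩ := Fintype.exists_ne_map_eq_of_card_lt
      (fun z : ↥X → F => (fun s : ↥S =>
        val (fun i => if h : i ∈ X then z ⟨i, h⟩ else 0) (s : V))) hcard
    set x : Fin n → F := fun i => if h : i ∈ X then z₁ ⟨i, h⟩ else 0 with hxdef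
    set y : Fin n → F := fun i => if h : i ∈ X then z₂ ⟨i, h⟩ else 0 with hydef
    have hxy : x ≠ y := by
      intro h
      apply hz
      funext i
      have h2 := congrFun h (i : Fin n)
      simpa [hxdef, hydef, i.2] using h2
    have hoff : ∀ i : Fin n, i ∉ X → x i = y i := by
      intro i hi
      simp [hxdef, hydef, dif_neg hi]
    have hvalS : ∀ s ∈ S, val x s = val y s := fun s hs => congrFun hvaleq ⟨s, hs⟩
    -- determinacy: values at vertices separated from X by S agree
    set Clean : V → Prop := fun v => ∀ p : List V, p.Chain' E →
        (∃ i ∈ X, p.head? = some (inp i)) → p.getLast? = some v → ∃ s ∈ S, s ∈ p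
      with hCleandef
    have hclean : ∀ v : V, Clean v → val x v = val y v := by
      intro v
      refine WellFounded.induction hacyclic (C := fun v => Clean v → val x v = val y v) v ?_
      intro v ih hcl
      by_cases hvmem : v ∈ S
      · exact hvalS v hvmem
      by_cases hinp : ∃ i : Fin n, inp i = v
      · obtain ⟨i, rfl⟩ := hinp
        by_cases hiX : i ∈ X
        · exfalso
          obtain ⟨s, hsS, hsp⟩ := hcl [inp i] (List.isChain_singleton _) ⟨i, hiX, rfl⟩ rfl
          rw [List.mem_singleton] at hsp
          rw [hsp] at hsS
          exact hvmem hsS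
        · rw [hval_inp, hval_inp]
          exact hoff i hiX
      · push_neg at hinp
        apply hval_gate v hinp x y
        intro u hu
        apply ih u hu
        intro p hp hph hpl
        have hpne : p ≠ [] := SCAux.ne_nil_of_getLast? hpl
        have hch : (p ++ [v]).Chain' E := by
          simp only [List.Chain', List.isChain_append]
          refine ⟨hp, List.isChain_singleton _, ?_⟩
          intro a ha b hb
          rw [hpl, Option.mem_def, Option.some.injEq] at ha
          rw [List.head?_cons, Option.mem_def, Option.some.injEq] at hb
          rw [← ha, ← hb]
          exact hu
        have hph' : ∃ i ∈ X, (p ++ [v]).head? = some (inp i) := by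
          obtain ⟨i, hiX, hh⟩ := hph
          exact ⟨i, hiX, by rw [SCAux.head?_of_prefix ⟨[v], rfl⟩ hpne]; exact hh⟩
        obtain ⟨s, hsS, hsp⟩ := hcl (p ++ [v]) hch hph' (List.getLast?_concat)
        rcases List.mem_append.1 hsp with h | h
        · exact ⟨s, hsS, h⟩
        · rw [List.mem_singleton] at h
          rw [h] at hsS
          exact absurd hsS hvmem
    have hCY : ∀ j ∈ Y, C x j = C y j := by
      intro j hj
      rw [hC, hC]
      by_cases h : out j ∈ S
      · exact hvalS _ h
      apply hclean
      intro p hp hph hpl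
      apply hS p
      refine ⟨hp.imp (fun a b h' => (hGiff a b).2 h'), ?_, ?_⟩
      · obtain ⟨i, hiX, hh⟩ := hph
        exact ⟨inp i, Finset.mem_map_of_mem _ hiX, hh⟩
      · exact ⟨out j, Finset.mem_map_of_mem _ hj, hpl⟩
    -- hamming distance bounds
    have hdxy : hammingDist x y ≤ X.card := by
      have hsubset : (Finset.univ.filter fun i => x i ≠ y i) ⊆ X := by
        intro i hi
        rw [Finset.mem_filter] at hi
        by_contra hiX
        exact hi.2 (hoff i hiX)
      exact Finset.card_le_card hsubset
    have hdC : hammingDist (C x) (C y) + Y.card ≤ m := by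
      have hdisjoint : Disjoint (Finset.univ.filter fun j => C x j ≠ C y j) Y := by
        rw [Finset.disjoint_left]
        intro j hj hjY
        rw [Finset.mem_filter] at hj
        exact hj.2 (hCY j hjY)
      calc hammingDist (C x) (C y) + Y.card
          = ((Finset.univ.filter fun j => C x j ≠ C y j) ∪ Y).card :=
            (Finset.card_union_of_disjoint hdisjoint).symm
        _ ≤ Fintype.card (Fin m) := Finset.card_le_univ _
        _ = m := Fintype.card_fin m
    have h1 := hdist x y hxy
    have h2 : hammingDist x y ≤ Y.card := hXY ▸ hdxy
    omega
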